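/- Let N > 2 be real and p_n as above. Then lim_{n→∞} (log log p_n)/n = log φ, where φ = (1+√5)/2 is the golden ratio. -/

import Mathlib

open Filter

open Real goldenRatio in
lemma my_fib_lower : ∀ n : ℕ, φ ^ n ≤ (Nat.fib (n + 2) : ℝ) ∧
    φ ^ (n + 1) ≤ (Nat.fib (n + 3) : ℝ) := by
  intro n
  induction n with
  | zero =>
    constructor
    · norm_num
    · have := goldenRatio_lt_two
      norm_num [Nat.fib]
      linarith
  | succ n ih =>
    refine ⟨ih.2, ?_⟩
    have h1 : Nat.fib (n + 4) = Nat.fib (n + 2) + Nat.fib (n + 3) := Nat.fib_add_two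
    have h2 : φ ^ (n + 2) - φ ^ (n + 1) = φ ^ n := goldenRatio_pow_sub_goldenRatio_pow n
    have : ((n + 1) + 3) = n + 4 := by ring
    rw [this, h1]
    push_cast
    linarith [ih.1, ih.2]

open Real goldenRatio in
lemma my_fib_upper : ∀ n : ℕ, (Nat.fib (n + 1) : ℝ) ≤ φ ^ n ∧
    (Nat.fib (n + 2) : ℝ) ≤ φ ^ (n + 1) := by
  intro n
  induction n with
  | zero =>
    constructor
    · norm_num
    · have := one_lt_goldenRatio
      norm_num [Nat.fib]
      linarith
  | succ n ih =>
    refine ⟨ih.2, ?_⟩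
    have h1 : Nat.fib (n + 3) = Nat.fib (n + 1) + Nat.fib (n + 2) := Nat.fib_add_two
    have h2 : φ ^ (n + 2) - φ ^ (n + 1) = φ ^ n := goldenRatio_pow_sub_goldenRatio_pow n
    rw [show (n + 1) + 2 = n + 3 from by ring, h1]
    push_cast
    linarith [ih.1, ih.2]

theorem double_exponential_growth (N : ℝ) (hN : 2 < N) (p : ℕ → ℝ)
    (h0 : p 0 = 1) (h1 : p 1 = 1) (h2 : p 2 = 1)
    (hrec : ∀ n, p (n + 3) = N * p (n + 2) * p (n + 1) - p n) :
    Tendsto (fun n : ℕ => Real.log (Real.log (p n)) / n) atTop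
      (nhds (Real.log ((1 + Real.sqrt 5) / 2))) := by
  have hN1 : (1 : ℝ) < N - 1 := by linarith
  have hN1pos : (0 : ℝ) < N - 1 := by linarith
  have hNpos : (0 : ℝ) < N := by linarith
  have hlogN1 : 0 < Real.log (N - 1) := Real.log_pos hN1
  have hlogN : 0 < Real.log N := Real.log_pos (by linarith)
  have hφ : (1 : ℝ) < Real.goldenRatio := Real.one_lt_goldenRatio
  have hφpos : (0 : ℝ) < Real.goldenRatio := by linarith
  -- basic monotonicity and lower bound 1
  have key : ∀ n, 1 ≤ p n ∧ p n ≤ p (n + 1) ∧ p (n + 1) ≤ p (n + 2) := by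
    intro n
    induction n with
    | zero => exact ⟨by rw [h0], by rw [h0, h1], by rw [h1, h2]⟩
    | succ n ih =>
      obtain ⟨ha, hb, hc⟩ := ih
      refine ⟨by linarith, hc, ?_⟩
      have hr := hrec n
      show p (n + 2) ≤ p (n + 3)
      nlinarith [ha, hb, hc, hr, mul_nonneg (by linarith : (0:ℝ) ≤ p (n+2) - 1) (by linarith : (0:ℝ) ≤ p (n+1) - 1), mul_nonneg (mul_nonneg (by linarith : (0:ℝ) ≤ N - 2) (by linarith : (0:ℝ) ≤ p (n+2))) (by linarith : (0:ℝ) ≤ p (n+1))]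
  -- lower bound
  have hlow : ∀ n, (N - 1) ^ (Nat.fib (n + 1) - 1) ≤ p (n + 1) ∧
      (N - 1) ^ (Nat.fib (n + 2) - 1) ≤ p (n + 2) := by
    intro n
    induction n with
    | zero => simp [h1, h2, Nat.fib]
    | succ n ih =>
      obtain ⟨hA, hB⟩ := ih
      refine ⟨hB, ?_⟩
      have hf1 : 0 < Nat.fib (n + 1) := Nat.fib_pos.2 (by omega)
      have hf2 : 0 < Nat.fib (n + 2) := Nat.fib_pos.2 (by omega)
      have hf3 : Nat.fib (n + 3) = Nat.fib (n + 1) + Nat.fib (n + 2) := Nat.fib_add_two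
      have he : Nat.fib (n + 3) - 1 =
          (Nat.fib (n + 2) - 1) + (Nat.fib (n + 1) - 1) + 1 := by omega
      show (N - 1) ^ (Nat.fib (n + 3) - 1) ≤ p (n + 3)
      rw [he, pow_add, pow_add, pow_one]
      obtain ⟨ka, kb, kc⟩ := key n
      have hr := hrec n
      have hp1 : (1 : ℝ) ≤ p (n + 1) := by linarith
      have hp2 : (1 : ℝ) ≤ p (n + 2) := by linarith
      -- p (n+3) ≥ (N-1) * p(n+2) * p(n+1)
      have step : (N - 1) * (p (n + 2) * p (n + 1)) ≤ p (n + 3) := by nlinarith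
      have pa : (0 : ℝ) ≤ (N - 1) ^ (Nat.fib (n + 2) - 1) := by positivity
      have pb : (0 : ℝ) ≤ (N - 1) ^ (Nat.fib (n + 1) - 1) := by positivity
      have mul1 : (N - 1) ^ (Nat.fib (n + 2) - 1) * (N - 1) ^ (Nat.fib (n + 1) - 1)
          ≤ p (n + 2) * p (n + 1) :=
        mul_le_mul hB hA pb (by linarith)
      nlinarith [mul1, step]
  -- upper bound
  have hup : ∀ n, p (n + 1) ≤ N ^ (Nat.fib (n + 1) - 1) ∧
      p (n + 2) ≤ N ^ (Nat.fib (n + 2) - 1) := by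
    intro n
    induction n with
    | zero => simp [h1, h2, Nat.fib]
    | succ n ih =>
      obtain ⟨hA, hB⟩ := ih
      refine ⟨hB, ?_⟩
      have hf1 : 0 < Nat.fib (n + 1) := Nat.fib_pos.2 (by omega)
      have hf2 : 0 < Nat.fib (n + 2) := Nat.fib_pos.2 (by omega)
      have hf3 : Nat.fib (n + 3) = Nat.fib (n + 1) + Nat.fib (n + 2) := Nat.fib_add_two
      have he : Nat.fib (n + 3) - 1 =
          (Nat.fib (n + 2) - 1) + (Nat.fib (n + 1) - 1) + 1 := by omega
      show p (n + 3) ≤ N ^ (Nat.fib (n + 3) - 1)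
      rw [he, pow_add, pow_add, pow_one]
      obtain ⟨ka, kb, kc⟩ := key n
      have hr := hrec n
      have hp1 : (1 : ℝ) ≤ p (n + 1) := by linarith
      have hp2 : (1 : ℝ) ≤ p (n + 2) := by linarith
      have step : p (n + 3) ≤ N * (p (n + 2) * p (n + 1)) := by nlinarith
      have mul1 : p (n + 2) * p (n + 1)
          ≤ N ^ (Nat.fib (n + 2) - 1) * N ^ (Nat.fib (n + 1) - 1) :=
        mul_le_mul hB hA (by linarith) (by positivity)
      nlinarith [mul1, step]
  set c1 : ℝ := Real.log (Real.log (N - 1)) with hc1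
  set c2 : ℝ := Real.log (Real.log N) with hc2
  set L : ℝ := Real.log Real.goldenRatio with hL
  have hLpos : 0 < L := Real.log_pos hφ
  -- the squeeze
  have hconv1 : Tendsto (fun n : ℕ => L + (c1 - 3 * L) / n) atTop (nhds L) := by
    have := (tendsto_const_nhds (x := L) (f := atTop (α := ℕ))).add
      (tendsto_const_div_atTop_nhds_zero_nat (c1 - 3 * L))
    simpa using this
  have hconv2 : Tendsto (fun n : ℕ => L + (c2 - L) / n) atTop (nhds L) := by
    have := (tendsto_const_nhds (x := L) (f := atTop (α := ℕ))).add
      (tendsto_const_div_atTop_nhds_zero_nat (c2 - L))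
    simpa using this
  have main : Tendsto (fun n : ℕ => Real.log (Real.log (p n)) / n) atTop (nhds L) := by
    apply tendsto_of_tendsto_of_tendsto_of_le_of_le' hconv1 hconv2
    · -- lower bound eventually
      rw [eventually_atTop]
      refine ⟨4, fun n hn => ?_⟩
      obtain ⟨m, rfl⟩ : ∃ m, n = m + 4 := ⟨n - 4, by omega⟩
      set F : ℕ := Nat.fib (m + 4) - 1 with hF
      have hfibpos : 0 < Nat.fib (m + 4) := Nat.fib_pos.2 (by omega)
      have hFcast : (F : ℝ) = (Nat.fib (m + 4) : ℝ) - 1 := by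
        rw [hF]; push_cast [Nat.cast_sub hfibpos]; ring
      have hφlb : Real.goldenRatio ^ (m + 1) ≤ (F : ℝ) := by
        have hfl : Real.goldenRatio ^ (m + 2) ≤ (Nat.fib (m + 4) : ℝ) := by
          have := (my_fib_lower (m + 2)).1
          rwa [show (m + 2) + 2 = m + 4 from by ring] at this
        have hsub : Real.goldenRatio ^ (m + 2) - Real.goldenRatio ^ (m + 1) = Real.goldenRatio ^ m :=
          Real.goldenRatio_pow_sub_goldenRatio_pow m
        have h1m : (1 : ℝ) ≤ Real.goldenRatio ^ m := one_le_pow₀ (le_of_lt hφ)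
        rw [hFcast]; linarith
      have hplb : (N - 1) ^ F ≤ p (m + 4) := by
        have := (hlow (m + 3)).1
        rwa [show (m + 3) + 1 = m + 4 from by ring] at this
      have hFpos : (0 : ℝ) < (F : ℝ) := lt_of_lt_of_le (by positivity) hφlb
      have hlogp_lb : (F : ℝ) * Real.log (N - 1) ≤ Real.log (p (m + 4)) := by
        have := Real.log_le_log (by positivity) hplb
        rwa [Real.log_pow] at this
      have hlogp_pos : 0 < Real.log (p (m + 4)) :=
        lt_of_lt_of_le (by positivity) hlogp_lb
      have hll : ((m : ℝ) + 1) * L + c1 ≤ Real.log (Real.log (p (m + 4))) := by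
        have step1 : Real.log ((F : ℝ) * Real.log (N - 1)) ≤
            Real.log (Real.log (p (m + 4))) :=
          Real.log_le_log (by positivity) hlogp_lb
        have step2 : Real.log ((F : ℝ) * Real.log (N - 1)) =
            Real.log (F : ℝ) + c1 := by
          rw [Real.log_mul (by positivity) (by positivity), hc1]
        have step3 : ((m : ℝ) + 1) * L ≤ Real.log (F : ℝ) := by
          have h' := Real.log_le_log (by positivity) hφlb
          rw [Real.log_pow] at h'
          push_cast at h'
          rw [hL]
          linarith
        linarith
      -- divide by n
      have hnpos : (0 : ℝ) < ((m : ℝ) + 4) := by positivity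
      have heq : L + (c1 - 3 * L) / ((m + 4 : ℕ) : ℝ) =
          (((m : ℝ) + 1) * L + c1) / ((m : ℝ) + 4) := by
        push_cast
        field_simp
        ring
      rw [heq]
      have : (((m : ℝ) + 1) * L + c1) / ((m : ℝ) + 4) ≤
          Real.log (Real.log (p (m + 4))) / ((m : ℝ) + 4) :=
        (div_le_div_iff_of_pos_right hnpos).2 hll
      calc (((m : ℝ) + 1) * L + c1) / ((m : ℝ) + 4)
          ≤ Real.log (Real.log (p (m + 4))) / ((m : ℝ) + 4) := this
        _ = Real.log (Real.log (p (m + 4))) / (((m + 4 : ℕ) : ℝ)) := by push_cast; ring_nf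
    · -- upper bound eventually
      rw [eventually_atTop]
      refine ⟨4, fun n hn => ?_⟩
      obtain ⟨m, rfl⟩ : ∃ m, n = m + 4 := ⟨n - 4, by omega⟩
      set F : ℕ := Nat.fib (m + 4) - 1 with hF
      have hfibpos : 0 < Nat.fib (m + 4) := Nat.fib_pos.2 (by omega)
      have hFcast : (F : ℝ) = (Nat.fib (m + 4) : ℝ) - 1 := by
        rw [hF]; push_cast [Nat.cast_sub hfibpos]; ring
      have hφlb : Real.goldenRatio ^ (m + 1) ≤ (F : ℝ) := by
        have hfl : Real.goldenRatio ^ (m + 2) ≤ (Nat.fib (m + 4) : ℝ) := by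
          have := (my_fib_lower (m + 2)).1
          rwa [show (m + 2) + 2 = m + 4 from by ring] at this
        have hsub : Real.goldenRatio ^ (m + 2) - Real.goldenRatio ^ (m + 1) = Real.goldenRatio ^ m :=
          Real.goldenRatio_pow_sub_goldenRatio_pow m
        have h1m : (1 : ℝ) ≤ Real.goldenRatio ^ m := one_le_pow₀ (le_of_lt hφ)
        rw [hFcast]; linarith
      have hφub : (F : ℝ) ≤ Real.goldenRatio ^ (m + 3) := by
        have hfu : (Nat.fib (m + 4) : ℝ) ≤ Real.goldenRatio ^ (m + 3) := by
          have := (my_fib_upper (m + 3)).1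
          rwa [show (m + 3) + 1 = m + 4 from by ring] at this
        rw [hFcast]; linarith
      have hpub : p (m + 4) ≤ N ^ F := by
        have := (hup (m + 3)).1
        rwa [show (m + 3) + 1 = m + 4 from by ring] at this
      have hFpos : (0 : ℝ) < (F : ℝ) := lt_of_lt_of_le (by positivity) hφlb
      have hppos : (0 : ℝ) < p (m + 4) := by
        have := (key (m + 4)).1; linarith
      have hlogp_ub : Real.log (p (m + 4)) ≤ (F : ℝ) * Real.log N := by
        have := Real.log_le_log hppos hpub
        rwa [Real.log_pow] at this
      have hplb : (N - 1) ^ F ≤ p (m + 4) := by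
        have := (hlow (m + 3)).1
        rwa [show (m + 3) + 1 = m + 4 from by ring] at this
      have hlogp_lb : (F : ℝ) * Real.log (N - 1) ≤ Real.log (p (m + 4)) := by
        have := Real.log_le_log (by positivity) hplb
        rwa [Real.log_pow] at this
      have hlogp_pos : 0 < Real.log (p (m + 4)) :=
        lt_of_lt_of_le (by positivity) hlogp_lb
      have hll : Real.log (Real.log (p (m + 4))) ≤ ((m : ℝ) + 3) * L + c2 := by
        have step1 : Real.log (Real.log (p (m + 4))) ≤
            Real.log ((F : ℝ) * Real.log N) :=
          Real.log_le_log hlogp_pos hlogp_ub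
        have step2 : Real.log ((F : ℝ) * Real.log N) =
            Real.log (F : ℝ) + c2 := by
          rw [Real.log_mul (by positivity) (by positivity), hc2]
        have step3 : Real.log (F : ℝ) ≤ ((m : ℝ) + 3) * L := by
          have h' := Real.log_le_log hFpos hφub
          rw [Real.log_pow] at h'
          push_cast at h'
          rw [hL]
          linarith
        linarith
      have hnpos : (0 : ℝ) < ((m : ℝ) + 4) := by positivity
      have heq : L + (c2 - L) / ((m + 4 : ℕ) : ℝ) =
          (((m : ℝ) + 3) * L + c2) / ((m : ℝ) + 4) := by
        push_cast
        field_simp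
        ring
      rw [heq]
      calc Real.log (Real.log (p (m + 4))) / (((m + 4 : ℕ) : ℝ))
          = Real.log (Real.log (p (m + 4))) / ((m : ℝ) + 4) := by push_cast; ring_nf
        _ ≤ (((m : ℝ) + 3) * L + c2) / ((m : ℝ) + 4) :=
            (div_le_div_iff_of_pos_right hnpos).2 hll
  exact main
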